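/- Let R = ℂ[z₀,z₁,z₂]/(z₀² − z₁z₂) and let B̄ : R² → R² be the R-linear map given by the matrix [[z₀, −z₁],[−z₂, z₀]] (entries reduced mod f). Then the kernel of the R-linear map p : R² → R, p(u,v) = z₀u + z₁v, is exactly the image of B̄. In other words, the syzygies of the row (z₀ z₁) over R are generated by the columns of B̄, giving the start of the 2-periodic free resolution of the skyscraper module R/(z₀,z₁). -/

import Mathlib

/-!
STATEMENT 1: Let R = ℂ[z₀,z₁,z₂]/(z₀² − z₁z₂) and B̄ : R² → R² the map given by
[[z₀,−z₁],[−z₂,z₀]] (mod f).  Then the kernel of p : R² → R, p(u,v) = z₀u + z₁v,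
equals the image of B̄: the syzygies of the row (z₀ z₁) over R are generated by
the columns of B̄.
-/

set_option synthInstance.maxHeartbeats 1000000

noncomputable section
open MvPolynomial

/-- The polynomial ring S = ℂ[z₀,z₁,z₂]. -/
abbrev S3 : Type := MvPolynomial (Fin 3) ℂ

/-- The conic polynomial f = z₀² − z₁z₂. -/
def fConic : S3 := X 0 ^ 2 - X 1 * X 2

/-- R = ℂ[z₀,z₁,z₂]/(z₀² − z₁z₂). -/
abbrev Rconic : Type := S3 ⧸ Ideal.span {fConic}

/-- The quotient map S → R. -/
def q : S3 →+* Rconic := Ideal.Quotient.mk _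

/-- B̄ : the matrix [[z₀, −z₁],[−z₂, z₀]] with entries reduced mod f. -/
def Bbar : Matrix (Fin 2) (Fin 2) Rconic := !![q (X 0), -q (X 1); -q (X 2), q (X 0)]

/-- The R-linear map p : R² → R, p(u,v) = z₀·u + z₁·v. -/
def pmap : (Fin 2 → Rconic) →ₗ[Rconic] Rconic :=
  q (X 0) • LinearMap.proj 0 + q (X 1) • LinearMap.proj 1

set_option maxHeartbeats 1000000 in
lemma qf_zero : q fConic = 0 := by
  simp [q, Ideal.Quotient.eq_zero_iff_mem, Ideal.mem_span_singleton_self]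

lemma primeX0 : Prime (X 0 : S3) := by
  rw [← MulEquiv.prime_iff (MvPolynomial.finSuccEquiv ℂ 2).toRingEquiv.toMulEquiv
    (p := (X 0 : S3))]
  show Prime ((MvPolynomial.finSuccEquiv ℂ 2) (X 0))
  rw [MvPolynomial.finSuccEquiv_X_zero]
  exact Polynomial.prime_X

lemma not_X0_dvd_X1 : ¬ (X 0 : S3) ∣ X 1 := by
  rintro ⟨c, hc⟩
  have := congrArg (eval (fun i => if i = 1 then (1 : ℂ) else 0)) hc
  simp [eval_X] at this

set_option maxHeartbeats 1000000 in
theorem ker_row_eq_image_of_Bbar :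
    LinearMap.ker pmap = LinearMap.range Bbar.mulVecLin := by
  ext x
  simp only [LinearMap.mem_ker, LinearMap.mem_range]
  constructor
  · intro hx
    obtain ⟨U, hU⟩ := Ideal.Quotient.mk_surjective (x 0)
    obtain ⟨V, hV⟩ := Ideal.Quotient.mk_surjective (x 1)
    have hmem : X 0 * U + X 1 * V ∈ Ideal.span {fConic} := by
      rw [← Ideal.Quotient.eq_zero_iff_mem]
      have hpx : q (X 0) * x 0 + q (X 1) * x 1 = 0 := by
        simpa [pmap, smul_eq_mul] using hx
      rw [← hU, ← hV] at hpx
      simpa [q, map_add, map_mul] using hpx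
    obtain ⟨g, hg⟩ := Ideal.mem_span_singleton.mp hmem
    simp only [fConic] at hg
    have key : X 0 * (U - X 0 * g) = X 1 * (-V - X 2 * g) := by linear_combination hg
    have hdvd : (X 0 : S3) ∣ (-V - X 2 * g) := by
      have h1 : (X 0 : S3) ∣ X 1 * (-V - X 2 * g) := ⟨U - X 0 * g, key.symm⟩
      exact (primeX0.dvd_or_dvd h1).resolve_left not_X0_dvd_X1
    obtain ⟨h, hh⟩ := hdvd
    have hV2 : V = -(X 2 * g) - X 0 * h := by linear_combination -hh
    have hU2 : U = X 0 * g + X 1 * h := by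
      have h2 : X 0 * (U - X 0 * g) = X 0 * (X 1 * h) := by rw [key, hh]; ring
      have h3 := mul_left_cancel₀ (MvPolynomial.X_ne_zero 0) h2
      linear_combination h3
    refine ⟨![q g, q (-h)], ?_⟩
    funext i
    fin_cases i
    · show Bbar.mulVecLin ![q g, q (-h)] 0 = x 0
      rw [← hU, hU2]
      simp [Bbar, Matrix.mulVecLin_apply, Matrix.mulVec, dotProduct,
        Fin.sum_univ_two, map_add, map_mul, map_neg, q]
      ring
    · show Bbar.mulVecLin ![q g, q (-h)] 1 = x 1
      rw [← hV, hV2]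
      simp [Bbar, Matrix.mulVecLin_apply, Matrix.mulVec, dotProduct,
        Fin.sum_univ_two, map_add, map_mul, map_neg, map_sub, q]
      ring
  · rintro ⟨w, rfl⟩
    have hqf : q (X 0) ^ 2 - q (X 1) * q (X 2) = 0 := by
      have := qf_zero
      simpa [fConic, map_sub, map_mul, map_pow] using this
    simp [pmap, Bbar, Matrix.mulVecLin_apply, Matrix.mulVec, dotProduct,
      Fin.sum_univ_two, smul_eq_mul]
    linear_combination (w 0) * hqf


end
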